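/- Let (X,d) be a metric space, F ⊆ X a finite set of facility locations with values y : F → [0,1], and C' a finite set of clients with |C'| ≥ 2. For each j ∈ C' let x^j : F → [0,1] satisfy Σ_{i∈F} x^j_i = 1 and x^j_i ∈ {0, y_i} for every i, and set d_av(j) = Σ_{i∈F} x^j_i · d(i,j). Assume that for all distinct j, j' ∈ C' one has d(j,j') > 0 and d(j,j') ≥ 4·max{d_av(j), d_av(j')}. For j ∈ C' define R_j = (1/2)·min_{j'∈C', j'≠j} d(j,j') and the bundle U_j = {i ∈ F : x^j_i > 0 and d(i,j) < R_j}. Then for every j ∈ C' one has 1/2 ≤ Σ_{i∈U_j} y_i ≤ 1, and for all distinct j, j' ∈ C' the bundles U_j and U_{j'} are disjoint; in fact every i ∈ U_j and i' ∈ U_{j'} satisfy d(i,i') > 0. -/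

import Mathlib

open Classical in
/-- The lemma on filtered clients and bundles: if the clients of `C'` are
well-separated (`d(j,j') ≥ 4 max{d_av(j), d_av(j')}` and `d(j,j') > 0`), the
assignments satisfy `x^j_i ∈ {0, y_i}` and sum to `1`, `R_j` is half the distance
to the nearest other filtered client, and `U_j = {i ∈ F : x^j_i > 0, d(i,j) < R_j}`,
then `1/2 ≤ y(U_j) ≤ 1` for all `j ∈ C'`, and the bundles of distinct filtered
clients are disjoint — in fact at pairwise positive distances. -/
theorem stmt3 {X : Type*} [MetricSpace X] (F : Finset X) (y : X → ℝ)
    (hy0 : ∀ i ∈ F, 0 ≤ y i) (hy1 : ∀ i ∈ F, y i ≤ 1)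
    (C' : Finset X) (hC' : 2 ≤ C'.card)
    (x : X → X → ℝ)
    (hxsum : ∀ j ∈ C', ∑ i ∈ F, x j i = 1)
    (hx01 : ∀ j ∈ C', ∀ i ∈ F, x j i = 0 ∨ x j i = y i)
    (dav : X → ℝ) (hdav : ∀ j ∈ C', dav j = ∑ i ∈ F, x j i * dist i j)
    (hsep : ∀ j ∈ C', ∀ j' ∈ C', j ≠ j' →
      0 < dist j j' ∧ 4 * max (dav j) (dav j') ≤ dist j j')
    (Rf : X → ℝ)
    (hRf : ∀ j ∈ C',
      (∀ j' ∈ C', j' ≠ j → Rf j ≤ (1 / 2) * dist j j') ∧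
      ∃ j' ∈ C', j' ≠ j ∧ Rf j = (1 / 2) * dist j j')
    (U : X → Finset X)
    (hU : ∀ j ∈ C', U j = F.filter fun i => 0 < x j i ∧ dist i j < Rf j) :
    (∀ j ∈ C', 1 / 2 ≤ ∑ i ∈ U j, y i ∧ ∑ i ∈ U j, y i ≤ 1) ∧
    (∀ j ∈ C', ∀ j' ∈ C', j ≠ j' →
      Disjoint (U j) (U j') ∧ ∀ i ∈ U j, ∀ i' ∈ U j', 0 < dist i i') := by
  have hxnn : ∀ j ∈ C', ∀ i ∈ F, 0 ≤ x j i := by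
    intro j hj i hi
    rcases hx01 j hj i hi with h | h
    · simp [h]
    · rw [h]; exact hy0 i hi
  have hdavnn : ∀ j ∈ C', 0 ≤ dav j := by
    intro j hj
    rw [hdav j hj]
    exact Finset.sum_nonneg fun i hi => mul_nonneg (hxnn j hj i hi) dist_nonneg
  have hR : ∀ j ∈ C', 0 < Rf j ∧ 2 * dav j ≤ Rf j := by
    intro j hj
    obtain ⟨-, j', hj', hne, hRe⟩ := hRf j hj
    obtain ⟨hd0, hd4⟩ := hsep j hj j' hj' (Ne.symm hne)
    constructor
    · rw [hRe]; linarith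
    · have : dav j ≤ max (dav j) (dav j') := le_max_left _ _
      rw [hRe]; linarith
  have hmemU : ∀ j ∈ C', ∀ i, i ∈ U j → i ∈ F ∧ 0 < x j i ∧ dist i j < Rf j := by
    intro j hj i hi
    rw [hU j hj, Finset.mem_filter] at hi
    exact ⟨hi.1, hi.2⟩
  have hyx : ∀ j ∈ C', ∀ i ∈ U j, y i = x j i := by
    intro j hj i hi
    obtain ⟨hiF, hx, -⟩ := hmemU j hj i hi
    rcases hx01 j hj i hiF with h | h
    · exact absurd h (ne_of_gt hx)
    · exact h.symm
  refine ⟨?_, ?_⟩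
  · intro j hj
    have hsum := hxsum j hj
    have hUsub : U j ⊆ F := by rw [hU j hj]; exact Finset.filter_subset _ _
    have hyeq : ∑ i ∈ U j, y i = ∑ i ∈ U j, x j i :=
      Finset.sum_congr rfl (hyx j hj)
    obtain ⟨hRpos, hRdav⟩ := hR j hj
    constructor
    · -- lower bound
      have hsplit : ∑ i ∈ U j, x j i + ∑ i ∈ F.filter (fun i => ¬(0 < x j i ∧ dist i j < Rf j)), x j i = 1 := by
        rw [hU j hj]
        rw [Finset.sum_filter_add_sum_filter_not]
        exact hsum
      have hbound : Rf j * ∑ i ∈ F.filter (fun i => ¬(0 < x j i ∧ dist i j < Rf j)), x j i ≤ dav j := by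
        rw [Finset.mul_sum, hdav j hj]
        refine le_trans (Finset.sum_le_sum ?_)
          (Finset.sum_le_sum_of_subset_of_nonneg (Finset.filter_subset _ _)
            fun i hi _ => mul_nonneg (hxnn j hj i hi) dist_nonneg)
        intro i hi
        rw [Finset.mem_filter] at hi
        rcases not_and_or.mp hi.2 with h0 | hd
        · have : x j i = 0 := le_antisymm (not_lt.mp h0) (hxnn j hj i hi.1)
          simp [this]
        · rw [mul_comm (Rf j)]
          exact mul_le_mul_of_nonneg_left (not_lt.mp hd) (hxnn j hj i hi.1)
      have hout : ∑ i ∈ F.filter (fun i => ¬(0 < x j i ∧ dist i j < Rf j)), x j i ≤ 1 / 2 := by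
        rw [← mul_le_mul_iff_of_pos_left hRpos]
        calc Rf j * ∑ i ∈ F.filter (fun i => ¬(0 < x j i ∧ dist i j < Rf j)), x j i
            ≤ dav j := hbound
          _ ≤ Rf j * (1/2) := by linarith
      rw [hyeq]; linarith
    · rw [hyeq, ← hsum]
      exact Finset.sum_le_sum_of_subset_of_nonneg hUsub fun i hi _ => hxnn j hj i hi
  · intro j hj j' hj' hne
    have hpd : ∀ i ∈ U j, ∀ i' ∈ U j', 0 < dist i i' := by
      intro i hi i' hi'
      obtain ⟨-, -, hdi⟩ := hmemU j hj i hi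
      obtain ⟨-, -, hdi'⟩ := hmemU j' hj' i' hi'
      have h1 : Rf j ≤ (1/2) * dist j j' := (hRf j hj).1 j' hj' (Ne.symm hne)
      have h2 : Rf j' ≤ (1/2) * dist j' j := (hRf j' hj').1 j hj hne
      have htri : dist j j' ≤ dist i j + dist i i' + dist i' j' := by
        calc dist j j' ≤ dist j i' + dist i' j' := dist_triangle _ _ _
          _ ≤ (dist j i + dist i i') + dist i' j' := by
              have := dist_triangle j i i'
              linarith
          _ = dist i j + dist i i' + dist i' j' := by rw [dist_comm j i]
      have hcomm : dist j' j = dist j j' := dist_comm _ _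
      linarith
    refine ⟨Finset.disjoint_left.mpr fun i hi hi' => ?_, hpd⟩
    exact absurd (hpd i hi i hi') (by simp)
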